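/- Let f : H → (-∞,∞] and g : G → (-∞,∞] be proper closed convex functions and A : H → G a continuous linear map. If x* is a minimizer of x ↦ f(x) + g(A x) and there exists q with −q ∈ ∂g(A x*) and A* q ∈ ∂f(x*), then y* := A x* is a minimizer of y ↦ (f* ∘ A*)*(y) + g(y). -/

import Mathlib

lemma aux1 (a b : ℝ) (d : EReal) (h : ((b - a : ℝ) : EReal) ≤ d) :
    (b : EReal) - d ≤ (a : EReal) := by
  induction d using EReal.rec with
  | bot => exact absurd (le_bot_iff.mp h) (EReal.coe_ne_bot _)
  | coe t => norm_cast at h ⊢; linarith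
  | top => simp

lemma aux2 (c d : ℝ) (e : EReal) (h : e ≤ (d : EReal)) :
    ((c - d : ℝ) : EReal) ≤ (c : EReal) - e := by
  induction e using EReal.rec with
  | bot => simp
  | coe t => norm_cast at h ⊢; linarith
  | top => simp at h

noncomputable def econj {E : Type*} [NormedAddCommGroup E] [InnerProductSpace ℝ E]
    (f : E → EReal) (v : E) : EReal :=
  ⨆ x : E, ((inner ℝ v x : ℝ) : EReal) - f x

def EConvex {E : Type*} [NormedAddCommGroup E] [InnerProductSpace ℝ E] (f : E → EReal) : Prop :=
  ∀ x y : E, ∀ a b : ℝ, 0 ≤ a → 0 ≤ b → a + b = 1 →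
    f (a • x + b • y) ≤ (a : EReal) * f x + (b : EReal) * f y

def Proper {E : Type*} (f : E → EReal) : Prop :=
  (∃ x, f x ≠ ⊤) ∧ ∀ x, f x ≠ ⊥

/-- `v ∈ ∂f(x)`: the convex subdifferential. -/
def SubdiffAt {E : Type*} [NormedAddCommGroup E] [InnerProductSpace ℝ E]
    (f : E → EReal) (x v : E) : Prop :=
  ∀ y : E, f x + ((inner ℝ v (y - x) : ℝ) : EReal) ≤ f y

/-- if `x*` minimizes `f + g∘A` and `−q ∈ ∂g(Ax*)`, `A*q ∈ ∂f(x*)`, then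
`y* = A x*` minimizes `(f*∘A*)* + g`. -/
theorem stmt11 {H G : Type*} [NormedAddCommGroup H] [InnerProductSpace ℝ H] [CompleteSpace H]
    [NormedAddCommGroup G] [InnerProductSpace ℝ G] [CompleteSpace G]
    (f : H → EReal) (hf : Proper f) (hfc : LowerSemicontinuous f) (hfconv : EConvex f)
    (g : G → EReal) (hg : Proper g) (hgc : LowerSemicontinuous g) (hgconv : EConvex g)
    (A : H →L[ℝ] G) (xs : H)
    (hmin : ∀ x : H, f xs + g (A xs) ≤ f x + g (A x))
    (q : G) (hq1 : SubdiffAt g (A xs) (-q))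
    (hq2 : SubdiffAt f xs (ContinuousLinearMap.adjoint A q)) :
    ∀ y : G,
      econj (fun v : G => econj f (ContinuousLinearMap.adjoint A v)) (A xs) + g (A xs)
        ≤ econj (fun v : G => econj f (ContinuousLinearMap.adjoint A v)) y + g y := by
  intro y
  obtain ⟨x0, hx0⟩ := hf.1
  obtain ⟨y0, hy0⟩ := hg.1
  set B := ContinuousLinearMap.adjoint A with hB
  have hfxs_top : f xs ≠ ⊤ := by
    intro h
    have h2 := hq2 x0
    rw [h, EReal.top_add_of_ne_bot (EReal.coe_ne_bot _)] at h2
    exact hx0 (top_le_iff.mp h2)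
  have hgxs_top : g (A xs) ≠ ⊤ := by
    intro h
    have h2 := hq1 y0
    rw [h, EReal.top_add_of_ne_bot (EReal.coe_ne_bot _)] at h2
    exact hy0 (top_le_iff.mp h2)
  set r : ℝ := (f xs).toReal with hrdef
  have hr : f xs = (r : EReal) := (EReal.coe_toReal hfxs_top (hf.2 xs)).symm
  set s : ℝ := (g (A xs)).toReal with hsdef
  have hs : g (A xs) = (s : EReal) := (EReal.coe_toReal hgxs_top (hg.2 (A xs))).symm
  set m : ℝ := inner ℝ q (A xs) with hm
  -- Step A : F (A xs) ≤ r
  have hFA : econj (fun v : G => econj f (B v)) (A xs) ≤ (r : EReal) := by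
    apply iSup_le
    intro v
    have h1 : ((inner ℝ (A xs) v - r : ℝ) : EReal) ≤ econj f (B v) := by
      have h0 : ((inner ℝ (B v) xs : ℝ) : EReal) - f xs ≤ econj f (B v) :=
        le_iSup (fun x : H => ((inner ℝ (B v) x : ℝ) : EReal) - f x) xs
      have hiv : (inner ℝ (B v) xs : ℝ) = inner ℝ (A xs) v := by
        rw [hB, ContinuousLinearMap.adjoint_inner_left, real_inner_comm]
      rw [hr, hiv, ← EReal.coe_sub] at h0
      exact h0
    exact aux1 r (inner ℝ (A xs) v) _ h1
  -- Step B : econj f (B q) ≤ m - r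
  have hBq : econj f (B q) ≤ ((m - r : ℝ) : EReal) := by
    apply iSup_le
    intro x
    have h2 := hq2 x
    rw [hr] at h2
    have hin : (inner ℝ (B q) (x - xs) : ℝ) = inner ℝ (B q) x - m := by
      rw [inner_sub_right]
      congr 1
      rw [hm, hB, ContinuousLinearMap.adjoint_inner_left]
    rw [hin, ← EReal.coe_add] at h2
    have h2' : (((inner ℝ (B q) x : ℝ) - (m - r) : ℝ) : EReal) ≤ f x := by
      convert h2 using 2
      ring
    exact aux1 (m - r) (inner ℝ (B q) x) (f x) h2'
  -- Step C : lower bound on F y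
  have hFy : ((inner ℝ y q - (m - r) : ℝ) : EReal)
      ≤ econj (fun v : G => econj f (B v)) y := by
    refine le_trans (aux2 (inner ℝ y q) (m - r) _ hBq) ?_
    exact le_iSup (fun v : G => ((inner ℝ y v : ℝ) : EReal) - econj f (B v)) q
  -- Step D : lower bound on g y
  have hgy : ((s - inner ℝ y q + m : ℝ) : EReal) ≤ g y := by
    have h4 := hq1 y
    rw [hs] at h4
    have hin : (inner ℝ (-q) (y - A xs) : ℝ) = -(inner ℝ y q) + m := by
      rw [inner_neg_left, inner_sub_right, real_inner_comm q y, hm]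
      ring
    rw [hin, ← EReal.coe_add] at h4
    convert h4 using 2
    ring
  calc econj (fun v : G => econj f (B v)) (A xs) + g (A xs)
      ≤ (r : EReal) + (s : EReal) := add_le_add hFA (le_of_eq hs)
    _ = ((inner ℝ y q - (m - r) : ℝ) : EReal) + ((s - inner ℝ y q + m : ℝ) : EReal) := by
        rw [← EReal.coe_add, ← EReal.coe_add]
        norm_cast
        ring
    _ ≤ _ := add_le_add hFy hgy
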